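/- Suppose g, h are automorphisms of a locally finite regular tree T with h, g hyperbolic, and let v be a vertex. Set d_n = d(h^{-n}(v), axis(g)). Then the sequence (d_n) is eventually non-decreasing, and it is bounded if and only if ω_-(h) ∈ { ω_+(g), ω_-(g) }. -/

import Mathlib

namespace TreeAux
open SimpleGraph Walk

variable {V : Type*} {T : SimpleGraph V}

open scoped Classical in

lemma exists_geodesic (hT : T.Connected) (u w : V) :
    ∃ p : T.Walk u w, p.IsPath ∧ p.length = T.dist u w := by
  obtain ⟨p, hp⟩ := hT.exists_walk_length_eq_dist u w
  refine ⟨p.bypass, p.bypass_isPath, le_antisymm ?_ ?_⟩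
  · exact hp ▸ p.length_bypass_le
  · exact SimpleGraph.dist_le _

lemma dist_le_length_of_mem_support {u w x : V} {p : T.Walk u w} (hx : x ∈ p.support) :
    T.dist u x ≤ p.length := by
  classical
  exact le_trans (SimpleGraph.dist_le (p.takeUntil x hx)) (p.length_takeUntil_le hx)

lemma path_eq (hT : T.IsTree) {u w : V} {p q : T.Walk u w} (hp : p.IsPath) (hq : q.IsPath) :
    p = q := by
  obtain ⟨r, -, hr⟩ := hT.existsUnique_path u w
  rw [hr p hp, hr q hq]

/-- In a tree, the distances from a vertex to the two endpoints of an edge differ. -/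
lemma dist_ne_of_adj (hT : T.IsTree) {x y : V} (hxy : T.Adj x y) (v : V) :
    T.dist v x ≠ T.dist v y := by
  intro hEq
  classical
  obtain ⟨P, hP, hPl⟩ := exists_geodesic hT.isConnected v x
  obtain ⟨Q, hQ, hQl⟩ := exists_geodesic hT.isConnected v y
  by_cases hy : y ∈ P.support
  · -- then y is on the geodesic to x, forcing y = x
    have h1 : T.dist v y ≤ (P.takeUntil y hy).length := SimpleGraph.dist_le _
    have h2 : (P.takeUntil y hy).length + (P.dropUntil y hy).length = P.length := by
      rw [← SimpleGraph.Walk.length_append, P.take_spec hy]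
    have h3 : (P.dropUntil y hy).length = 0 := by omega
    exact hxy.ne' (SimpleGraph.Walk.eq_of_length_eq_zero h3) |>.elim
  · -- build a second path from v to y through x
    have hW : (Walk.cons hxy.symm P.reverse).reverse.IsPath := by
      apply SimpleGraph.Walk.IsPath.reverse
      rw [SimpleGraph.Walk.cons_isPath_iff]
      exact ⟨hP.reverse, by simpa [SimpleGraph.Walk.support_reverse] using hy⟩
    have := path_eq hT hW hQ
    have hlen : (Walk.cons hxy.symm P.reverse).reverse.length = Q.length := by rw [this]
    simp only [SimpleGraph.Walk.length_reverse, SimpleGraph.Walk.length_cons] at hlen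
    omega

/-- Over an edge, distance to a fixed vertex changes by exactly one. -/
lemma dist_adj_step (hT : T.IsTree) {x y : V} (hxy : T.Adj x y) (v : V) :
    T.dist v y = T.dist v x + 1 ∨ T.dist v x = T.dist v y + 1 := by
  have h1 : T.dist v y ≤ T.dist v x + 1 := by
    have := hT.isConnected.dist_triangle (u := v) (v := x) (w := y)
    rwa [(SimpleGraph.dist_eq_one_iff_adj).mpr hxy] at this
  have h2 : T.dist v x ≤ T.dist v y + 1 := by
    have := hT.isConnected.dist_triangle (u := v) (v := y) (w := x)
    rwa [(SimpleGraph.dist_eq_one_iff_adj).mpr hxy.symm] at this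
  have h3 := dist_ne_of_adj hT hxy v
  omega

/-- In a tree each vertex has at most one neighbour closer to a given vertex `v`. -/
lemma closer_neighbor_unique (hT : T.IsTree) {v w x y : V} (hx : T.Adj w x) (hy : T.Adj w y)
    (hdx : T.dist v x + 1 = T.dist v w) (hdy : T.dist v y + 1 = T.dist v w) : x = y := by
  obtain ⟨P, hP, hPl⟩ := exists_geodesic hT.isConnected v x
  obtain ⟨Q, hQ, hQl⟩ := exists_geodesic hT.isConnected v y
  have hwP : w ∉ P.support := fun hw => by
    have := dist_le_length_of_mem_support hw; omega
  have hwQ : w ∉ Q.support := fun hw => by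
    have := dist_le_length_of_mem_support hw; omega
  have hW1 : (Walk.cons hx P.reverse).reverse.IsPath := by
    apply SimpleGraph.Walk.IsPath.reverse
    rw [SimpleGraph.Walk.cons_isPath_iff]
    exact ⟨hP.reverse, by simpa [SimpleGraph.Walk.support_reverse] using hwP⟩
  have hW2 : (Walk.cons hy Q.reverse).reverse.IsPath := by
    apply SimpleGraph.Walk.IsPath.reverse
    rw [SimpleGraph.Walk.cons_isPath_iff]
    exact ⟨hQ.reverse, by simpa [SimpleGraph.Walk.support_reverse] using hwQ⟩
  have hEq := path_eq hT hW1 hW2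
  have : (Walk.cons hx P.reverse).reverse.reverse.getVert 1
      = (Walk.cons hy Q.reverse).reverse.reverse.getVert 1 := by rw [hEq]
  simpa [SimpleGraph.Walk.reverse_reverse, SimpleGraph.Walk.getVert_cons] using this

/-- first step of a geodesic -/
lemma exists_closer_adj (hT : T.IsTree) {u w : V} (hne : u ≠ w) :
    ∃ x, T.Adj u x ∧ T.dist x w + 1 = T.dist u w := by
  obtain ⟨p, hp, hpl⟩ := exists_geodesic hT.isConnected u w
  have hnil : ¬ p.Nil := SimpleGraph.Walk.not_nil_of_ne hne
  refine ⟨p.getVert 1, p.adj_snd hnil, ?_⟩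
  have h1 : T.dist (p.getVert 1) w ≤ p.tail.length := SimpleGraph.dist_le _
  have h2 : p.tail.length + 1 = p.length := SimpleGraph.Walk.length_tail_add_one hnil
  have h3 : T.dist u w ≤ T.dist u (p.getVert 1) + T.dist (p.getVert 1) w :=
    hT.isConnected.dist_triangle
  have h4 : T.dist u (p.getVert 1) = 1 :=
    (SimpleGraph.dist_eq_one_iff_adj).mpr (p.adj_snd hnil)
  omega

lemma dist_perm_eq (hT : T.Connected) (σ : Equiv.Perm V)
    (hσ : ∀ u w : V, T.Adj u w ↔ T.Adj (σ u) (σ w)) (u w : V) :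
    T.dist (σ u) (σ w) = T.dist u w := by
  have key : ∀ (τ : Equiv.Perm V), (∀ u w : V, T.Adj u w ↔ T.Adj (τ u) (τ w)) →
      ∀ u w : V, T.dist (τ u) (τ w) ≤ T.dist u w := by
    intro τ hτ u w
    obtain ⟨p, hp⟩ := hT.exists_walk_length_eq_dist u w
    let F : T →g T := ⟨⇑τ, fun h => (hτ _ _).1 h⟩
    calc T.dist (τ u) (τ w) ≤ (p.map F).length := SimpleGraph.dist_le _
    _ = p.length := SimpleGraph.Walk.length_map F p
    _ = T.dist u w := hp
  refine le_antisymm (key σ hσ u w) ?_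
  have hσ' : ∀ u w : V, T.Adj u w ↔ T.Adj (σ⁻¹ u) (σ⁻¹ w) := by
    intro u w
    constructor
    · intro hadj
      have := (hσ (σ⁻¹ u) (σ⁻¹ w)).2
      simp only [Equiv.Perm.inv_def, Equiv.apply_symm_apply] at this
      exact this hadj
    · intro hadj
      have := (hσ (σ⁻¹ u) (σ⁻¹ w)).1 hadj
      simpa using this
  have := key σ⁻¹ hσ' (σ u) (σ w)
  simpa using this

/-- Combinatorial valley lemma. -/
lemma valley_of_steps (f : ℤ → ℕ)
    (hstep : ∀ j, f (j + 1) = f j + 1 ∨ f j = f (j + 1) + 1)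
    (hmono : ∀ j, f j < f (j + 1) → f (j + 1) < f (j + 2)) :
    ∃ m : ℤ, ∀ j, f j = f m + (j - m).natAbs := by
  set S : ℤ → Prop := fun j => f j < f (j + 1) with hS
  have hup : ∀ j, S j → ∀ k, j ≤ k → S k := by
    intro j hj
    refine Int.le_induction hj ?_
    intro n _ ih
    have := hmono n ih
    have hidx : n + 1 + 1 = n + 2 := by ring
    show f (n + 1) < f (n + 1 + 1)
    rw [hidx]; exact this
  have hSne : ∃ j, S j := by
    by_contra hall
    push_neg at hall
    have hdec : ∀ j, f j = f (j + 1) + 1 := by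
      intro j
      rcases hstep j with h | h
      · exact absurd (by omega : f j < f (j+1)) (by simpa [hS] using hall j)
      · exact h
    have key : ∀ k : ℕ, f 0 = f (k : ℤ) + k := by
      intro k
      induction k with
      | zero => simp
      | succ n ih => have := hdec (n : ℤ); push_cast; push_cast at ih; omega
    have := key (f 0 + 1)
    omega
  have hScne : ∃ j, ¬ S j := by
    by_contra hall
    push_neg at hall
    have hinc : ∀ j : ℤ, f (j + 1) = f j + 1 := by
      intro j
      have hj := hall j
      rw [hS] at hj
      rcases hstep j with h | h
      · exact h
      · omega
    have key : ∀ k : ℕ, f 0 = f (-(k : ℤ)) + k := by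
      intro k
      induction k with
      | zero => simp
      | succ n ih =>
          have := hinc (-(n : ℤ) - 1)
          have h2 : (-(n:ℤ) - 1) + 1 = -(n:ℤ) := by ring
          rw [h2] at this
          have h3 : (-(↑(n+1) : ℤ)) = -(n:ℤ) - 1 := by push_cast; ring
          rw [h3]; push_cast at ih ⊢; omega
    have := key (f 0 + 1)
    omega
  obtain ⟨j₁, hj₁⟩ := hScne
  obtain ⟨m, hmS, hmin⟩ := Int.exists_least_of_bdd (P := S)
    ⟨j₁, fun z hz => by by_contra hc; exact hj₁ (hup z hz j₁ (by omega))⟩ hSne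
  refine ⟨m, fun j => ?_⟩
  have hupf : ∀ j, m ≤ j → (f j : ℤ) = f m + (j - m) := by
    refine Int.le_induction (by omega) ?_
    intro n hn ih
    have hnS : S n := hup m hmS n hn
    rw [hS] at hnS
    rcases hstep n with h | h
    · rw [h]; push_cast; omega
    · omega
  have hdownf : ∀ j, j ≤ m → (f j : ℤ) = f m + (m - j) := by
    refine Int.le_induction_down (by omega) ?_
    intro n hn ih
    have hnS : ¬ f (n - 1) < f (n - 1 + 1) := fun hc => by
      have := hmin _ (show S (n - 1) from hc); omega
    have h2 : (n - 1 : ℤ) + 1 = n := by ring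
    rw [h2] at hnS
    rcases hstep (n - 1) with h | h
    · rw [h2] at h; omega
    · rw [h2] at h; omega
  rcases le_total m j with hc | hc
  · have := hupf j hc; omega
  · have := hdownf j hc; omega

lemma center_unique {a b : ℕ} {m m' : ℤ}
    (h : ∀ j : ℤ, a + (j - m).natAbs = b + (j - m').natAbs) : a = b ∧ m = m' := by
  have h1 := h m; have h2 := h m'; constructor <;> omega

/-- Every vertex has a "valley" distance profile along a line in a tree. -/
lemma exists_center (hT : T.IsTree) (p : ℤ → V) (hp1 : Function.Injective p)
    (hp2 : ∀ i, T.Adj (p i) (p (i + 1))) (u : V) :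
    ∃ m : ℤ, ∀ j, T.dist u (p j) = T.dist u (p m) + (j - m).natAbs := by
  apply valley_of_steps (fun j => T.dist u (p j))
  · intro j
    rcases dist_adj_step hT (hp2 j) u with h | h
    · left; exact h
    · right; exact h
  · intro j h1
    by_contra hc
    push_neg at hc
    have hidx : j + 2 = j + 1 + 1 := by ring
    rw [hidx] at hc
    rcases dist_adj_step hT (hp2 (j + 1)) u with h | h
    · omega
    · rcases dist_adj_step hT (hp2 j) u with h' | h'
      · have heq := closer_neighbor_unique (v := u) hT (hp2 j).symm (hp2 (j + 1))
          (by omega) (by omega)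
        have := hp1 heq
        omega
      · omega

lemma dist_le_dist_add_one (hT : T.IsTree) {x y : V} (hxy : T.Adj x y) (t : V) :
    T.dist x t ≤ T.dist y t + 1 := by
  have h1 := hT.isConnected.dist_triangle (u := x) (v := y) (w := t)
  have h2 : T.dist x y = 1 := (SimpleGraph.dist_eq_one_iff_adj).mpr hxy
  omega

section Bridge

variable (p : ℤ → V) (ρ : V → ℤ)

/-- adjacent vertices have close valley profiles -/
lemma adj_profile (hT : T.IsTree)
    (hspec : ∀ u j, T.dist u (p j) = T.dist u (p (ρ u)) + (j - ρ u).natAbs)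
    {x y : V} (hxy : T.Adj x y) :
    ((T.dist x (p (ρ x)) : ℤ) - T.dist y (p (ρ y))).natAbs + (ρ x - ρ y).natAbs ≤ 1 := by
  set j₁ := min (ρ x) (ρ y) with hj₁
  set j₂ := max (ρ x) (ρ y) with hj₂
  have hj1a : j₁ ≤ ρ x := min_le_left _ _
  have hj1b : j₁ ≤ ρ y := min_le_right _ _
  have hj2a : ρ x ≤ j₂ := le_max_left _ _
  have hj2b : ρ y ≤ j₂ := le_max_right _ _
  have e1 := hspec x j₁
  have e2 := hspec y j₁
  have e3 := hspec x j₂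
  have e4 := hspec y j₂
  have i1 := dist_le_dist_add_one hT hxy (p j₁)
  have i2 := dist_le_dist_add_one hT hxy.symm (p j₁)
  have i3 := dist_le_dist_add_one hT hxy (p j₂)
  have i4 := dist_le_dist_add_one hT hxy.symm (p j₂)
  omega

/-- if the projection changes over an edge, both ends lie on the axis -/
lemma crossing (hT : T.IsTree)
    (hspec : ∀ u j, T.dist u (p j) = T.dist u (p (ρ u)) + (j - ρ u).natAbs)
    {x y : V} (hxy : T.Adj x y) (hρ : ρ x ≠ ρ y) :
    T.dist x (p (ρ x)) = 0 := by
  by_contra hαx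
  have hprof := adj_profile p ρ hT hspec hxy
  have hαeq : T.dist y (p (ρ y)) = T.dist x (p (ρ x)) := by omega
  have hk : (ρ y - ρ x).natAbs = 1 := by omega
  -- x is not its own projection
  have hne : x ≠ p (ρ x) := by
    intro he
    rw [← he] at hαx
    exact hαx (SimpleGraph.dist_self)
  obtain ⟨x', hadj, hx'⟩ := exists_closer_adj hT hne
  -- compute the profile of x'
  have e1 := hspec x' (ρ x)
  have e2 := hspec x (ρ x')
  have i2 := dist_le_dist_add_one hT hadj (p (ρ x'))
  have hρx' : ρ x' = ρ x := by omega
  have hαx' : T.dist x' (p (ρ x')) + 1 = T.dist x (p (ρ x)) := by omega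
  -- distances to the shifted axis point
  have d1 : T.dist x (p (ρ y)) = T.dist x (p (ρ x)) + 1 := by
    have := hspec x (ρ y); omega
  have d2 : T.dist y (p (ρ y)) + 1 = T.dist x (p (ρ y)) := by omega
  have d3 : T.dist x' (p (ρ y)) + 1 = T.dist x (p (ρ y)) := by
    have := hspec x' (ρ y); rw [hρx'] at *; omega
  have heq : x' = y := by
    refine closer_neighbor_unique (v := p (ρ y)) hT hadj hxy ?_ ?_
    · rw [SimpleGraph.dist_comm (u := p (ρ y)), SimpleGraph.dist_comm (v := x)]
      exact d3
    · rw [SimpleGraph.dist_comm (u := p (ρ y)), SimpleGraph.dist_comm (v := x)]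
      exact d2
  rw [heq] at hαx' hρx'
  rw [hρx'] at hαx'
  omega

/-- the bridge formula: distance between two vertices with different projections -/
lemma bridge (hT : T.IsTree)
    (hspec : ∀ u j, T.dist u (p j) = T.dist u (p (ρ u)) + (j - ρ u).natAbs) :
    ∀ u w : V, ρ u ≠ ρ w →
      T.dist u w = T.dist u (p (ρ u)) + (ρ u - ρ w).natAbs + T.dist w (p (ρ w)) := by
  suffices H : ∀ n : ℕ, ∀ u w : V, T.dist u w = n → ρ u ≠ ρ w →
      T.dist u w = T.dist u (p (ρ u)) + (ρ u - ρ w).natAbs + T.dist w (p (ρ w)) by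
    intro u w hρ; exact H _ u w rfl hρ
  intro n
  induction n using Nat.strong_induction_on with
  | _ n ih =>
    intro u w hn hρ
    have hupper : T.dist u w ≤
        T.dist u (p (ρ u)) + (ρ u - ρ w).natAbs + T.dist w (p (ρ w)) := by
      have h1 := hT.isConnected.dist_triangle (u := u) (v := p (ρ u)) (w := w)
      have h2 : T.dist (p (ρ u)) w = T.dist w (p (ρ w)) + (ρ u - ρ w).natAbs := by
        rw [SimpleGraph.dist_comm]
        have := hspec w (ρ u); omega
      omega
    by_cases hα : T.dist u (p (ρ u)) = 0
    · have hu : u = p (ρ u) := (hT.isConnected.dist_eq_zero_iff).mp hα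
      have h2 : T.dist (p (ρ u)) w = T.dist w (p (ρ w)) + (ρ u - ρ w).natAbs := by
        rw [SimpleGraph.dist_comm]
        have := hspec w (ρ u); omega
      rw [← hu] at h2
      omega
    · have hne : u ≠ w := fun he => hρ (by rw [he])
      obtain ⟨x, hadj, hx⟩ := exists_closer_adj hT hne
      have hρx : ρ x = ρ u := by
        by_contra hc
        exact hα (crossing p ρ hT hspec hadj (fun he => hc he.symm))
      have hdn : T.dist u w = n := hn
      have hpos : 1 ≤ T.dist u w := hT.isConnected.pos_dist_of_ne hne
      have hih := ih (T.dist x w) (by omega) x w rfl (by rw [hρx]; exact hρ)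
      rw [hρx] at hih
      rcases dist_adj_step hT hadj (p (ρ u)) with h | h
      · -- x is further from the axis point : contradiction with upper bound
        rw [SimpleGraph.dist_comm (u := p (ρ u)) (v := u),
            SimpleGraph.dist_comm (u := p (ρ u)) (v := x)] at h
        have e := hspec x (ρ x)
        rw [hρx] at e
        omega
      · rw [SimpleGraph.dist_comm (u := p (ρ u)) (v := u),
            SimpleGraph.dist_comm (u := p (ρ u)) (v := x)] at h
        have e := hspec x (ρ x)
        rw [hρx] at e
        omega

end Bridge

/-- discrete intermediate value, upward -/
lemma int_ivt_up (r : ℤ → ℤ) (hstep : ∀ j, (r (j + 1) - r j).natAbs ≤ 1) (k : ℤ) :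
    ∀ (n : ℕ) (a : ℤ), r a ≤ k → k < r (a + n) → ∃ j, r j = k ∧ r (j + 1) = k + 1 := by
  intro n
  induction n with
  | zero => intro a h1 h2; simp at h2; omega
  | succ n ih =>
      intro a h1 h2
      rcases le_or_gt (r (a + n)) k with h | h
      · have hs := hstep (a + n)
        have hidx : a + ((n : ℤ) + 1) = (a + n) + 1 := by ring
        rw [show ((n + 1 : ℕ) : ℤ) = (n : ℤ) + 1 by push_cast; ring, hidx] at h2
        exact ⟨a + n, by omega, by omega⟩
      · exact ih a h1 h

/-- discrete intermediate value, downward -/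
lemma int_ivt_down (r : ℤ → ℤ) (hstep : ∀ j, (r (j + 1) - r j).natAbs ≤ 1) (k : ℤ) :
    ∀ (n : ℕ) (a : ℤ), r (a + n) ≤ k → k < r a → ∃ j, r (j + 1) = k ∧ r j = k + 1 := by
  intro n
  induction n with
  | zero => intro a h1 h2; simp at h1; omega
  | succ n ih =>
      intro a h1 h2
      rcases le_or_gt (r (a + n)) k with h | h
      · exact ih a h h2
      · have hs := hstep (a + n)
        have hidx : a + ((n : ℤ) + 1) = (a + n) + 1 := by ring
        rw [show ((n + 1 : ℕ) : ℤ) = (n : ℤ) + 1 by push_cast; ring, hidx] at h1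
        exact ⟨a + n, by omega, by omega⟩

end TreeAux


/-- `p : ℤ → V` is a translation axis for `g` with translation length `l ≥ 1`. -/
def IsTransAxis {V : Type*} (T : SimpleGraph V) (g : Equiv.Perm V) (p : ℤ → V) (l : ℕ) :
    Prop :=
  Function.Injective p ∧ (∀ i : ℤ, T.Adj (p i) (p (i + 1))) ∧ 1 ≤ l ∧
    ∀ i : ℤ, g (p i) = p (i + l)

/-- Distance from a vertex `u` to the (parametrized) axis `p`. -/
noncomputable def distToAxis {V : Type*} (T : SimpleGraph V) (p : ℤ → V) (u : V) : ℕ :=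
  sInf (Set.range fun i : ℤ => T.dist u (p i))

/-- Let `g, h` be hyperbolic automorphisms of a locally finite regular
tree `T`, with axes `pg, ph`, and let `v` be a vertex.  Set `dₙ = d(h⁻ⁿ(v), axis(g))`.
Then `(dₙ)` is eventually non-decreasing, and it is bounded if and only if
`ω₋(h) ∈ {ω₊(g), ω₋(g)}` (the backward ray of `h` meets the forward or the backward ray
of `g` in infinitely many vertices). -/
theorem dist_to_axis_seq {V : Type*} (T : SimpleGraph V) (hT : T.IsTree)
    [∀ v : V, Fintype (T.neighborSet v)]
    (d : ℕ) (hd : 2 ≤ d) (hreg : ∀ v : V, T.degree v = d)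
    (g h : Equiv.Perm V)
    (hg : ∀ u w : V, T.Adj u w ↔ T.Adj (g u) (g w))
    (hh : ∀ u w : V, T.Adj u w ↔ T.Adj (h u) (h w))
    (pg ph : ℤ → V) (lg lh : ℕ)
    (hpg : IsTransAxis T g pg lg) (hph : IsTransAxis T h ph lh)
    (v : V) :
    (∃ N : ℕ, ∀ n : ℕ, N ≤ n →
        distToAxis T pg ((h⁻¹ ^ n) v) ≤ distToAxis T pg ((h⁻¹ ^ (n + 1)) v)) ∧
    (BddAbove (Set.range fun n : ℕ => distToAxis T pg ((h⁻¹ ^ n) v)) ↔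
      ((Set.range fun n : ℕ => ph (-(n : ℤ))) ∩
          Set.range fun n : ℕ => pg (n : ℤ)).Infinite ∨
      ((Set.range fun n : ℕ => ph (-(n : ℤ))) ∩
          Set.range fun n : ℕ => pg (-(n : ℤ))).Infinite) := by
  classical
  obtain ⟨hginj, hgadj, hlg, hgax⟩ := hpg
  obtain ⟨hhinj, hhadj, hlh, hhax⟩ := hph
  have conn := hT.isConnected
  -- valley data for the h-axis and the g-axis
  choose ρ hρ using fun u => TreeAux.exists_center hT ph hhinj hhadj u
  choose π hπ using fun u => TreeAux.exists_center hT pg hginj hgadj u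
  -- distToAxis is realized at the projection
  have hax : ∀ u : V, distToAxis T pg u = T.dist u (pg (π u)) := by
    intro u
    refine le_antisymm (Nat.sInf_le ⟨π u, rfl⟩) ?_
    refine le_csInf ⟨_, ⟨0, rfl⟩⟩ ?_
    rintro b ⟨i, rfl⟩
    show T.dist u (pg (π u)) ≤ T.dist u (pg i)
    rw [hπ u i]
    omega
  -- h is an isometry
  have hiso : ∀ u w : V, T.dist (h u) (h w) = T.dist u w :=
    TreeAux.dist_perm_eq conn h hh
  have hinvdist : ∀ (u : V) (j : ℤ), T.dist (h⁻¹ u) (ph j) = T.dist u (ph (j + lh)) := by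
    intro u j
    rw [← hiso (h⁻¹ u) (ph j), Equiv.Perm.inv_def, Equiv.apply_symm_apply, hhax j]
  -- applying h⁻¹ shifts the projection on the h-axis down by lh
  have hkey : ∀ u : V, ρ (h⁻¹ u) = ρ u - (lh : ℤ) ∧
      T.dist (h⁻¹ u) (ph (ρ (h⁻¹ u))) = T.dist u (ph (ρ u)) := by
    intro u
    have huniq : ∀ j : ℤ, T.dist (h⁻¹ u) (ph (ρ (h⁻¹ u))) + (j - ρ (h⁻¹ u)).natAbs
        = T.dist u (ph (ρ u)) + (j - (ρ u - (lh : ℤ))).natAbs := by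
      intro j
      have h1 := hρ (h⁻¹ u) j
      have h2 := hinvdist u j
      have h3 := hρ u (j + lh)
      omega
    obtain ⟨hab, hm⟩ := TreeAux.center_unique huniq
    exact ⟨hm, hab⟩
  set M : ℕ → ℤ := fun n => ρ v - n * lh with hM
  have hMsucc : ∀ n : ℕ, M (n + 1) = M n - lh := by
    intro n; rw [hM]; push_cast; ring
  have hMlt : ∀ n : ℕ, M n ≤ ρ v - n := by
    intro n
    have h1 : (n : ℤ) * 1 ≤ (n : ℤ) * lh :=
      mul_le_mul_of_nonneg_left (by exact_mod_cast hlh) (by positivity)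
    simp only [hM]
    omega
  have hpow : ∀ n : ℕ, (h⁻¹ ^ (n + 1)) v = h⁻¹ ((h⁻¹ ^ n) v) := by
    intro n; rw [pow_succ']; rfl
  have horb : ∀ n : ℕ, ρ ((h⁻¹ ^ n) v) = M n ∧
      T.dist ((h⁻¹ ^ n) v) (ph (ρ ((h⁻¹ ^ n) v))) = T.dist v (ph (ρ v)) := by
    intro n
    induction n with
    | zero => simp [hM]
    | succ n ih =>
        rw [hpow n]
        obtain ⟨h1, h2⟩ := hkey ((h⁻¹ ^ n) v)
        refine ⟨?_, by rw [h2, ih.2]⟩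
        rw [h1, ih.1, hMsucc n]
  set c : ℕ := T.dist v (ph (ρ v)) with hc
  -- points on the h-axis
  have haxph : ∀ k : ℤ, ρ (ph k) = k ∧ T.dist (ph k) (ph (ρ (ph k))) = 0 := by
    intro k
    have h1 := hρ (ph k) k
    have h0 : T.dist (ph k) (ph k) = 0 := SimpleGraph.dist_self
    constructor <;> omega
  have hphph : ∀ i j : ℤ, T.dist (ph i) (ph j) = (j - i).natAbs := by
    intro i j
    have h1 := hρ (ph i) j
    have h2 := (haxph i).1
    have h3 := (haxph i).2
    rw [h2] at h1 h3
    omega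
  have haxpg : ∀ k : ℤ, π (pg k) = k ∧ T.dist (pg k) (pg (π (pg k))) = 0 := by
    intro k
    have h1 := hπ (pg k) k
    have h0 : T.dist (pg k) (pg k) = 0 := SimpleGraph.dist_self
    constructor <;> omega
  have hpgpg : ∀ i j : ℤ, T.dist (pg i) (pg j) = (j - i).natAbs := by
    intro i j
    have h1 := hπ (pg i) j
    have h2 := (haxpg i).1
    have h3 := (haxpg i).2
    rw [h2] at h1 h3
    omega
  have honaxis : ∀ j k : ℤ, pg j = ph k →
      ρ (pg j) = k ∧ T.dist (pg j) (ph (ρ (pg j))) = 0 := by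
    intro j k hjk
    rw [hjk]
    exact haxph k
  by_cases hB : ∃ t : ℤ, ∀ j : ℤ, t ≤ ρ (pg j)
  · -- Case B : the g-axis stays on the positive side; distances grow linearly
    obtain ⟨t, ht⟩ := hB
    obtain ⟨K, ⟨j₀, hj₀⟩, hKmin⟩ := Int.exists_least_of_bdd
      (P := fun z => ∃ j : ℤ, (ρ (pg j) : ℤ) + T.dist (pg j) (ph (ρ (pg j))) = z)
      ⟨t, by rintro z ⟨j, rfl⟩; have := ht j; omega⟩
      ⟨_, 0, rfl⟩
    have hform : ∀ n : ℕ, M n < t →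
        distToAxis T pg ((h⁻¹ ^ n) v) = c + (K - M n).toNat := by
      intro n hm
      have hρn := (horb n).1
      have hαn := (horb n).2
      rw [hρn] at hαn
      have hval : ∀ j : ℤ, T.dist ((h⁻¹ ^ n) v) (pg j) =
          c + (((ρ (pg j) : ℤ) + T.dist (pg j) (ph (ρ (pg j)))) - M n).toNat := by
        intro j
        have hb := TreeAux.bridge ph ρ hT hρ ((h⁻¹ ^ n) v) (pg j)
          (by rw [hρn]; have := ht j; omega)
        rw [hρn] at hb
        have := ht j
        omega
      rw [show distToAxis T pg ((h⁻¹ ^ n) v)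
          = sInf (Set.range fun i : ℤ => T.dist ((h⁻¹ ^ n) v) (pg i)) from rfl]
      refine le_antisymm ?_ ?_
      · have hle : sInf (Set.range fun i : ℤ => T.dist ((h⁻¹ ^ n) v) (pg i)) ≤
            T.dist ((h⁻¹ ^ n) v) (pg j₀) := Nat.sInf_le ⟨j₀, rfl⟩
        rw [hval j₀] at hle
        have := ht j₀
        omega
      · refine le_csInf ⟨_, ⟨0, rfl⟩⟩ ?_
        rintro b ⟨i, rfl⟩
        show c + (K - M n).toNat ≤ T.dist ((h⁻¹ ^ n) v) (pg i)
        rw [hval i]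
        have := hKmin _ ⟨i, rfl⟩
        have := ht i
        omega
    set N : ℕ := (ρ v - t).toNat + 1 with hN
    have hNlt : ∀ n : ℕ, N ≤ n → M n < t := by
      intro n hn
      have := hMlt n
      omega
    constructor
    · refine ⟨N, fun n hn => ?_⟩
      rw [hform n (hNlt n hn), hform (n + 1) (hNlt (n + 1) (by omega))]
      have := hMsucc n
      omega
    · constructor
      · -- bounded is impossible
        intro hbdd
        exfalso
        obtain ⟨b, hb⟩ := hbdd
        set n : ℕ := N + b + 1 + (ρ v - K).toNat with hn
        have hbn := hb (Set.mem_range_self (f := fun n : ℕ =>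
          distToAxis T pg ((h⁻¹ ^ n) v)) n)
        rw [hform n (hNlt n (by omega))] at hbn
        have h1 := hMlt n
        omega
      · -- the rays cannot meet infinitely often
        rintro (hinf | hinf) <;> exfalso
        · refine hinf ?_
          refine Set.Finite.subset (Set.Finite.image (fun a : ℕ => ph (-(a : ℤ)))
            (Set.finite_Iic (-t).toNat)) ?_
          rintro x ⟨⟨a, ha⟩, ⟨b, hbx⟩⟩
          have ha' : ph (-(a : ℤ)) = x := ha
          have hb' : pg ((b : ℕ) : ℤ) = x := hbx
          refine ⟨a, ?_, ha⟩
          have hx := (honaxis (b : ℤ) (-(a : ℤ)) (by rw [hb', ← ha'])).1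
          have := ht (b : ℤ)
          simp only [Set.mem_Iic]
          omega
        · refine hinf ?_
          refine Set.Finite.subset (Set.Finite.image (fun a : ℕ => ph (-(a : ℤ)))
            (Set.finite_Iic (-t).toNat)) ?_
          rintro x ⟨⟨a, ha⟩, ⟨b, hbx⟩⟩
          have ha' : ph (-(a : ℤ)) = x := ha
          have hb' : pg (-((b : ℕ) : ℤ)) = x := hbx
          refine ⟨a, ?_, ha⟩
          have hx := (honaxis (-(b : ℤ)) (-(a : ℤ)) (by rw [hb', ← ha'])).1
          have := ht (-(b : ℤ))
          simp only [Set.mem_Iic]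
          omega
  · -- Case A : the g-axis goes arbitrarily far in the ω₋(h) direction
    push_neg at hB
    -- step bound for the projection of the g-axis
    have hstepr : ∀ j : ℤ, ((ρ (pg (j + 1)) : ℤ) - ρ (pg j)).natAbs ≤ 1 := by
      intro j
      have := TreeAux.adj_profile ph ρ hT hρ (hgadj j)
      omega
    -- whenever the projection changes, the g-axis crosses the h-axis
    have hcrossed : ∀ j : ℤ, ρ (pg j) ≠ ρ (pg (j + 1)) → pg j = ph (ρ (pg j)) := by
      intro j hne
      have := TreeAux.crossing ph ρ hT hρ (hgadj j) hne
      exact conn.dist_eq_zero_iff.mp this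
    have hcrossed' : ∀ j : ℤ, ρ (pg j) ≠ ρ (pg (j + 1)) → pg (j + 1) = ph (ρ (pg (j + 1))) := by
      intro j hne
      have := TreeAux.crossing ph ρ hT hρ (hgadj j).symm (fun he => hne he.symm)
      exact conn.dist_eq_zero_iff.mp this
    -- the g-axis passes through every h-axis vertex below ρ (pg 0)
    have hhit : ∀ k : ℤ, k < ρ (pg 0) → ∃ j : ℤ, pg j = ph k := by
      intro k hk
      obtain ⟨j₁, hj₁⟩ := hB k
      rcases le_total j₁ 0 with hj | hj
      · have hend : j₁ + ((0 - j₁).toNat : ℤ) = 0 := by omega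
        obtain ⟨j, hja, hjb⟩ := TreeAux.int_ivt_up (fun j => ρ (pg j)) hstepr k
          (0 - j₁).toNat j₁ (show ρ (pg j₁) ≤ k by omega)
          (by rw [hend]; exact hk)
        have hja' : ρ (pg j) = k := hja
        have hjb' : ρ (pg (j + 1)) = k + 1 := hjb
        refine ⟨j, ?_⟩
        rw [hcrossed j (by omega), hja']
      · have hend : (0 : ℤ) + (j₁.toNat : ℤ) = j₁ := by omega
        obtain ⟨j, hja, hjb⟩ := TreeAux.int_ivt_down (fun j => ρ (pg j)) hstepr k
          j₁.toNat 0 (show ρ (pg ((0:ℤ) + (j₁.toNat : ℤ))) ≤ k by rw [hend]; omega) hk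
        have hja' : ρ (pg (j + 1)) = k := hja
        have hjb' : ρ (pg j) = k + 1 := hjb
        refine ⟨j + 1, ?_⟩
        rw [hcrossed' j (by omega), hja']
    -- no vertex of the g-axis hangs strictly below the crossing range
    have hbranch : ∀ k : ℤ, k + 1 < ρ (pg 0) → ∀ j : ℤ, ρ (pg j) = k →
        T.dist (pg j) (ph (ρ (pg j))) = 0 := by
      intro k hk j hrj
      obtain ⟨j₀, hj₀⟩ := hhit (k - 1) (by omega)
      obtain ⟨j₂, hj₂⟩ := hhit (k + 1) (by omega)
      have hd0 : T.dist (pg j) (pg j₀) = (j₀ - j).natAbs := hpgpg j j₀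
      have hd2 : T.dist (pg j) (pg j₂) = (j₂ - j).natAbs := hpgpg j j₂
      have he0 : T.dist (pg j) (pg j₀) =
          T.dist (pg j) (ph (ρ (pg j))) + ((k - 1) - ρ (pg j)).natAbs := by
        rw [hj₀]; exact hρ (pg j) (k - 1)
      have he2 : T.dist (pg j) (pg j₂) =
          T.dist (pg j) (ph (ρ (pg j))) + ((k + 1) - ρ (pg j)).natAbs := by
        rw [hj₂]; exact hρ (pg j) (k + 1)
      have h02 : T.dist (pg j₀) (pg j₂) = (j₂ - j₀).natAbs := hpgpg j₀ j₂
      have h02' : T.dist (pg j₀) (pg j₂) = 2 := by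
        rw [hj₀, hj₂, hphph]
        omega
      have hne02 : j₀ ≠ j₂ := by
        intro he
        rw [he, hj₂] at hj₀
        have := hhinj hj₀
        omega
      omega
    set N : ℕ := (ρ v - ρ (pg 0) + 2).toNat + 1 with hN
    have hNlt : ∀ n : ℕ, N ≤ n → M n + 1 < ρ (pg 0) := by
      intro n hn
      have := hMlt n
      omega
    have hconst : ∀ n : ℕ, N ≤ n → distToAxis T pg ((h⁻¹ ^ n) v) = c := by
      intro n hn
      have hρn := (horb n).1
      have hαn := (horb n).2
      rw [hρn] at hαn
      rw [show distToAxis T pg ((h⁻¹ ^ n) v)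
          = sInf (Set.range fun i : ℤ => T.dist ((h⁻¹ ^ n) v) (pg i)) from rfl]
      refine le_antisymm ?_ ?_
      · obtain ⟨j, hj⟩ := hhit (M n) (by have := hNlt n hn; omega)
        have hle : sInf (Set.range fun i : ℤ => T.dist ((h⁻¹ ^ n) v) (pg i)) ≤
            T.dist ((h⁻¹ ^ n) v) (pg j) := Nat.sInf_le ⟨j, rfl⟩
        rw [hj, hαn] at hle
        exact hle
      · refine le_csInf ⟨_, ⟨0, rfl⟩⟩ ?_
        rintro b ⟨i, rfl⟩
        show c ≤ T.dist ((h⁻¹ ^ n) v) (pg i)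
        by_cases hri : ρ (pg i) = M n
        · have hq := hbranch (M n) (hNlt n hn) i hri
          have hpgi : pg i = ph (M n) := by
            rw [← hri]
            exact conn.dist_eq_zero_iff.mp hq
          rw [hpgi, hαn]
        · have hb := TreeAux.bridge ph ρ hT hρ ((h⁻¹ ^ n) v) (pg i)
            (by rw [hρn]; exact fun he => hri he.symm)
          rw [hρn] at hb
          omega
    constructor
    · exact ⟨N, fun n hn => by rw [hconst n hn, hconst (n + 1) (by omega)]⟩
    · constructor
      · intro _
        -- the rays share infinitely many vertices
        set KS : Set ℤ := {k | k ≤ 0 ∧ ∃ j : ℤ, pg j = ph k} with hKS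
        have hKinf : KS.Infinite := by
          intro hfin
          obtain ⟨b, hbb⟩ := hfin.bddBelow
          obtain ⟨j, hj⟩ := hhit (min (min b (ρ (pg 0))) 0 - 1) (by omega)
          have hmem : (min (min b (ρ (pg 0))) 0 - 1) ∈ KS := ⟨by omega, j, hj⟩
          have := hbb hmem
          omega
        have himg : ((fun k : ℤ => ph k) '' KS).Infinite :=
          hKinf.image (Set.injOn_of_injective hhinj)
        by_contra hcon
        push_neg at hcon
        obtain ⟨h1, h2⟩ := hcon
        refine himg ?_
        refine Set.Finite.subset (h1.union h2) ?_
        rintro x ⟨k, ⟨hk0, j, hj⟩, rfl⟩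
        have hmem1 : ph k ∈ Set.range fun n : ℕ => ph (-(n : ℤ)) := by
          refine ⟨(-k).toNat, ?_⟩
          show ph (-(((-k).toNat : ℕ) : ℤ)) = ph k
          congr 1
          omega
        rcases le_total 0 j with hjs | hjs
        · refine Or.inl ⟨hmem1, ⟨j.toNat, ?_⟩⟩
          show pg ((j.toNat : ℕ) : ℤ) = ph k
          rw [← hj]
          congr 1
          omega
        · refine Or.inr ⟨hmem1, ⟨(-j).toNat, ?_⟩⟩
          show pg (-(((-j).toNat : ℕ) : ℤ)) = ph k
          rw [← hj]
          congr 1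
          omega
      · intro _
        refine ⟨(Finset.range (N + 1)).sup (fun k => distToAxis T pg ((h⁻¹ ^ k) v)) + c, ?_⟩
        rintro x ⟨n, rfl⟩
        show distToAxis T pg ((h⁻¹ ^ n) v) ≤
          (Finset.range (N + 1)).sup (fun k => distToAxis T pg ((h⁻¹ ^ k) v)) + c
        rcases le_or_gt n N with hn | hn
        · have hmem : n ∈ Finset.range (N + 1) := Finset.mem_range.mpr (by omega)
          have hle := Finset.le_sup (f := fun k => distToAxis T pg ((h⁻¹ ^ k) v)) hmem
          omega
        · rw [hconst n (by omega)]
          omega
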